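/- arXiv:2001.11431 — 3 statements merged into one kernel-verified Lean document; each statement's English description precedes it below -/
import Mathlib

section
/- Let D be a Steiner 2-(2^{m+s} - 2^m + 2^s, 2^s, 1) design with m ≥ s ≥ 1, and let C⊥ be the dual of the binary code spanned by the incidence matrix of D. Every codeword of C⊥ of weight 2^m + 2 has support equal to a hyperoval of D, and conversely the characteristic vector of every hyperoval of D lies in C⊥. Hence the number of codewords of weight 2^m + 2 in C⊥ equals the number of hyperovals of D. -/
open Finset

lemma zmod2_eq_one : ∀ x : ZMod 2, x ≠ 0 → x = 1 := by decide

lemma key_hyperoval {X : Type*} [Fintype X] [DecidableEq X]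
    (m s : ℕ) (hs : 1 ≤ s) (hms : s ≤ m)
    (B : Finset (Finset X))
    (hv : Fintype.card X = 2 ^ (m + s) - 2 ^ m + 2 ^ s)
    (hblock : ∀ b ∈ B, b.card = 2 ^ s)
    (hpair : ∀ p q : X, p ≠ q → ∃! b, b ∈ B ∧ p ∈ b ∧ q ∈ b)
    (S : Finset X) (hS : S.card = 2 ^ m + 2)
    (heven : ∀ b ∈ B, Even ((S ∩ b).card)) :
    ∀ b ∈ B, (S ∩ b).card = 0 ∨ (S ∩ b).card = 2 := by
  have hb2 : 2 ≤ 2 ^ s := by calc 2 = 2^1 := rfl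
                                  _ ≤ 2^s := Nat.pow_le_pow_right (by norm_num) hs
  have ha2 : 2 ≤ 2 ^ m := le_trans hb2 (Nat.pow_le_pow_right (by norm_num) hms)
  have hms' : 2 ^ (m + s) = 2 ^ m * 2 ^ s := pow_add 2 m s
  intro b hb
  rcases Nat.eq_zero_or_pos ((S ∩ b).card) with h0 | hpos
  · exact Or.inl h0
  right
  obtain ⟨p, hp⟩ := Finset.card_pos.mp hpos
  have hpS : p ∈ S := (Finset.mem_inter.mp hp).1
  have hpb : p ∈ b := (Finset.mem_inter.mp hp).2
  set Bp := B.filter (fun b' => p ∈ b') with hBp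
  -- blocks through p are pairwise disjoint off p
  have hdisj : ∀ b1 ∈ Bp, ∀ b2 ∈ Bp, b1 ≠ b2 → Disjoint (b1.erase p) (b2.erase p) := by
    intro b1 h1 b2 h2 hne
    rw [Finset.mem_filter] at h1 h2
    rw [Finset.disjoint_left]
    intro q hq1 hq2
    have hqp : q ≠ p := Finset.ne_of_mem_erase hq1
    obtain ⟨u, _, hu⟩ := hpair p q (Ne.symm hqp)
    exact hne ((hu b1 ⟨h1.1, h1.2, Finset.mem_of_mem_erase hq1⟩).trans
      (hu b2 ⟨h2.1, h2.2, Finset.mem_of_mem_erase hq2⟩).symm)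
  -- first biUnion: covers everything but p
  have hcov : Bp.biUnion (fun b' => b'.erase p) = univ.erase p := by
    ext q
    simp only [Finset.mem_biUnion, Finset.mem_erase, Finset.mem_univ, and_true]
    constructor
    · rintro ⟨b', _, hq, _⟩; exact hq
    · intro hq
      obtain ⟨u, ⟨huB, hpu, hqu⟩, _⟩ := hpair p q (Ne.symm hq)
      exact ⟨u, Finset.mem_filter.mpr ⟨huB, hpu⟩, hq, hqu⟩
  have hcard1 : Bp.card * (2 ^ s - 1) = Fintype.card X - 1 := by
    have := Finset.card_biUnion hdisj
    rw [hcov] at this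
    rw [Finset.card_erase_of_mem (Finset.mem_univ p), Finset.card_univ] at this
    rw [this, Finset.sum_congr rfl (fun b' hb' => by
      rw [Finset.card_erase_of_mem (Finset.mem_filter.mp hb').2,
        hblock b' (Finset.mem_filter.mp hb').1]),
      Finset.sum_const, smul_eq_mul]
  have hrB : Bp.card = 2 ^ m + 1 := by
    have he : (2 ^ m + 1) * (2 ^ s - 1) = Fintype.card X - 1 := by
      rw [hv]
      zify [show 1 ≤ 2^s by omega, show 2^m ≤ 2^(m+s) by rw [hms']; nlinarith,
        show 1 ≤ 2^(m+s) - 2^m + 2^s by omega]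
      ring
    have := hcard1.trans he.symm
    exact Nat.eq_of_mul_eq_mul_right (by omega) this
  -- second biUnion: covers S minus p
  have hdisj2 : ∀ b1 ∈ Bp, ∀ b2 ∈ Bp, b1 ≠ b2 →
      Disjoint ((S ∩ b1).erase p) ((S ∩ b2).erase p) := by
    intro b1 h1 b2 h2 hne
    exact (hdisj b1 h1 b2 h2 hne).mono
      (Finset.erase_subset_erase _ (Finset.inter_subset_right))
      (Finset.erase_subset_erase _ (Finset.inter_subset_right))
  have hcov2 : Bp.biUnion (fun b' => (S ∩ b').erase p) = S.erase p := by
    ext q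
    simp only [Finset.mem_biUnion, Finset.mem_erase, Finset.mem_filter, Finset.mem_inter]
    constructor
    · rintro ⟨b', _, hq, hqS, _⟩; exact ⟨hq, hqS⟩
    · rintro ⟨hqp, hqS⟩
      obtain ⟨u, ⟨huB, hpu, hqu⟩, _⟩ := hpair p q (Ne.symm hqp)
      exact ⟨u, Finset.mem_filter.mpr ⟨huB, hpu⟩, hqp, hqS, hqu⟩
  have hsum2 : ∑ b' ∈ Bp, ((S ∩ b').erase p).card = 2 ^ m + 1 := by
    rw [← Finset.card_biUnion hdisj2, hcov2, Finset.card_erase_of_mem hpS, hS]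
    omega
  have hge : ∀ b' ∈ Bp, 1 ≤ ((S ∩ b').erase p).card := by
    intro b' hb'
    rw [Finset.mem_filter] at hb'
    have hpm : p ∈ S ∩ b' := Finset.mem_inter.mpr ⟨hpS, hb'.2⟩
    have hev := heven b' hb'.1
    have hge1 : 1 ≤ (S ∩ b').card := Finset.card_pos.mpr ⟨p, hpm⟩
    have : 2 ≤ (S ∩ b').card := by
      rcases hev with ⟨k, hk⟩; omega
    rw [Finset.card_erase_of_mem hpm]; omega
  have hone : ∀ b' ∈ Bp, ((S ∩ b').erase p).card = 1 := by
    by_contra h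
    push_neg at h
    obtain ⟨b0, hb0, hne⟩ := h
    have hlt : ∑ _b' ∈ Bp, 1 < ∑ b' ∈ Bp, ((S ∩ b').erase p).card :=
      Finset.sum_lt_sum hge ⟨b0, hb0, by have := hge b0 hb0; omega⟩
    rw [Finset.sum_const, smul_eq_mul, mul_one, hrB, hsum2] at hlt
    omega
  have hbBp : b ∈ Bp := Finset.mem_filter.mpr ⟨hb, hpb⟩
  have := hone b hbBp
  rw [Finset.card_erase_of_mem hp] at this
  have : 1 ≤ (S ∩ b).card := Finset.card_pos.mpr ⟨p, hp⟩
  have h2 := hone b hbBp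
  rw [Finset.card_erase_of_mem hp] at h2
  omega

lemma sum_indicator_block {X : Type*} [Fintype X] [DecidableEq X]
    (c : X → ZMod 2) (b : Finset X) :
    ∑ p ∈ b, c p = (((univ.filter (fun p => c p ≠ 0)) ∩ b).card : ZMod 2) := by
  have hset : (univ.filter (fun p => c p ≠ 0)) ∩ b = b.filter (fun p => c p ≠ 0) := by
    ext q; simp [and_comm]
  rw [hset]
  rw [← Finset.sum_filter_ne_zero b (f := c)]
  rw [Finset.sum_congr rfl (fun p hp => zmod2_eq_one (c p) (Finset.mem_filter.mp hp).2)]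
  rw [Finset.sum_const, nsmul_eq_mul, mul_one]

/-- For a Steiner 2-(2^{m+s} - 2^m + 2^s, 2^s, 1) design D with m ≥ s ≥ 1 and
the dual C⊥ of the binary code spanned by its incidence matrix: every codeword
of C⊥ of weight 2^m + 2 has support a hyperoval of D, the characteristic
vector of every hyperoval lies in C⊥, and the number of codewords of weight
2^m + 2 in C⊥ equals the number of hyperovals of D. -/
theorem dual_min_words_are_hyperovals {X : Type*} [Fintype X] [DecidableEq X]
    (m s : ℕ) (hs : 1 ≤ s) (hms : s ≤ m)
    (B : Finset (Finset X))
    (hv : Fintype.card X = 2 ^ (m + s) - 2 ^ m + 2 ^ s)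
    (hblock : ∀ b ∈ B, b.card = 2 ^ s)
    (hpair : ∀ p q : X, p ≠ q → ∃! b, b ∈ B ∧ p ∈ b ∧ q ∈ b) :
    (∀ c : X → ZMod 2, (∀ b ∈ B, ∑ p ∈ b, c p = 0) →
      (univ.filter (fun p => c p ≠ 0)).card = 2 ^ m + 2 →
      ∀ b ∈ B, ((univ.filter (fun p => c p ≠ 0)) ∩ b).card = 0 ∨
        ((univ.filter (fun p => c p ≠ 0)) ∩ b).card = 2) ∧
    (∀ S : Finset X, S.card = 2 ^ m + 2 →
      (∀ b ∈ B, (S ∩ b).card = 0 ∨ (S ∩ b).card = 2) →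
      ∀ b ∈ B, ∑ p ∈ b, (if p ∈ S then (1 : ZMod 2) else 0) = 0) ∧
    (univ.filter (fun c : X → ZMod 2 => (∀ b ∈ B, ∑ p ∈ b, c p = 0) ∧
        (univ.filter (fun p => c p ≠ 0)).card = 2 ^ m + 2)).card =
      (univ.filter (fun S : Finset X => S.card = 2 ^ m + 2 ∧
        ∀ b ∈ B, (S ∩ b).card = 0 ∨ (S ∩ b).card = 2)).card := by
  have part1 : ∀ c : X → ZMod 2, (∀ b ∈ B, ∑ p ∈ b, c p = 0) →
      (univ.filter (fun p => c p ≠ 0)).card = 2 ^ m + 2 →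
      ∀ b ∈ B, ((univ.filter (fun p => c p ≠ 0)) ∩ b).card = 0 ∨
        ((univ.filter (fun p => c p ≠ 0)) ∩ b).card = 2 := by
    intro c hc hw
    refine key_hyperoval m s hs hms B hv hblock hpair _ hw ?_
    intro b hb
    have := hc b hb
    rw [sum_indicator_block c b] at this
    have h2 : (2 : ℕ) ∣ ((univ.filter (fun p => c p ≠ 0)) ∩ b).card :=
      (ZMod.natCast_eq_zero_iff _ 2).mp this
    exact (Nat.even_iff.mpr (Nat.mod_eq_zero_of_dvd h2))
  have part2 : ∀ S : Finset X, S.card = 2 ^ m + 2 →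
      (∀ b ∈ B, (S ∩ b).card = 0 ∨ (S ∩ b).card = 2) →
      ∀ b ∈ B, ∑ p ∈ b, (if p ∈ S then (1 : ZMod 2) else 0) = 0 := by
    intro S _ hS b hb
    have hfe : (univ.filter (fun p => (if p ∈ S then (1 : ZMod 2) else 0) ≠ 0)) = S := by
      ext q
      simp only [Finset.mem_filter, Finset.mem_univ, true_and]
      split <;> simp_all
    rw [sum_indicator_block (fun p => if p ∈ S then (1 : ZMod 2) else 0) b, hfe]
    rcases hS b hb with h | h <;> rw [h] <;> decide
  refine ⟨part1, part2, ?_⟩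
  apply Finset.card_bij (fun c _ => univ.filter (fun p => c p ≠ 0))
  · intro c hc
    rw [Finset.mem_filter] at hc ⊢
    exact ⟨Finset.mem_univ _, hc.2.2, part1 c hc.2.1 hc.2.2⟩
  · intro c1 h1 c2 h2 heq
    funext x
    by_cases hx : c1 x = 0
    · have : x ∉ univ.filter (fun p => c2 p ≠ 0) := by
        rw [← heq]; simp [hx]
      simp only [Finset.mem_filter, Finset.mem_univ, true_and, not_not] at this
      rw [hx, this]
    · have : x ∈ univ.filter (fun p => c2 p ≠ 0) := by
        rw [← heq]; simp [hx]
      simp only [Finset.mem_filter, Finset.mem_univ, true_and] at this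
      rw [zmod2_eq_one _ hx, zmod2_eq_one _ this]
  · intro S hSmem
    rw [Finset.mem_filter] at hSmem
    refine ⟨fun p => if p ∈ S then (1 : ZMod 2) else 0, ?_, ?_⟩
    · have hfe : (univ.filter (fun p => (if p ∈ S then (1 : ZMod 2) else 0) ≠ 0)) = S := by
        ext q
        simp only [Finset.mem_filter, Finset.mem_univ, true_and]
        split <;> simp_all
      rw [Finset.mem_filter]
      exact ⟨Finset.mem_univ _, part2 S hSmem.2.1 hSmem.2.2, by rw [hfe]; exact hSmem.2.1⟩
    · ext q
      simp only [Finset.mem_filter, Finset.mem_univ, true_and]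
      split <;> simp_all
end

section
/- Let D be a Steiner 2-(2^{m+s} - 2^m + 2^s, 2^s, 1) design with m ≥ s ≥ 1 and let C⊥ be the dual of the binary code of D. Then the minimum distance d⊥ of C⊥ satisfies d⊥ ≥ 2^m + 2; moreover d⊥ = 2^m + 2 if D contains a hyperoval, and d⊥ ≥ 2^m + 4 if D has no hyperovals. -/
open Finset

section Aux

variable {X : Type*} [Fintype X] [DecidableEq X]

/-- The blocks through a point `p` partition `T.erase p` for any set `T` containing `p`. -/
lemma steiner_partition (B : Finset (Finset X))
    (hpair : ∀ p q : X, p ≠ q → ∃! b, b ∈ B ∧ p ∈ b ∧ q ∈ b)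
    (p : X) (T : Finset X) :
    (T.erase p).card = ∑ b ∈ B.filter (fun b => p ∈ b), ((b ∩ T).erase p).card := by
  rw [← Finset.card_biUnion]
  · congr 1
    ext q
    simp only [mem_biUnion, mem_erase, mem_filter, mem_inter]
    constructor
    · rintro ⟨hq, hqT⟩
      obtain ⟨b, ⟨hb, hpb, hqb⟩, -⟩ := hpair p q (Ne.symm hq)
      exact ⟨b, ⟨hb, hpb⟩, hq, hqb, hqT⟩
    · rintro ⟨b, -, hq, -, hqT⟩
      exact ⟨hq, hqT⟩
  · intro b1 h1 b2 h2 hne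
    simp only [mem_coe, mem_filter] at h1 h2
    rw [Function.onFun, Finset.disjoint_left]
    intro q hq1 hq2
    simp only [mem_erase, mem_inter] at hq1 hq2
    obtain ⟨b, -, hu⟩ := hpair p q (Ne.symm hq1.1)
    exact hne ((hu b1 ⟨h1.1, h1.2, hq1.2.1⟩).trans (hu b2 ⟨h2.1, h2.2, hq2.2.1⟩).symm)

/-- The number of blocks through a point (the replication number) is `2^m + 1`. -/
lemma steiner_replication (m s : ℕ) (hs : 1 ≤ s) (B : Finset (Finset X))
    (hv : Fintype.card X = 2 ^ (m + s) - 2 ^ m + 2 ^ s)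
    (hblock : ∀ b ∈ B, b.card = 2 ^ s)
    (hpair : ∀ p q : X, p ≠ q → ∃! b, b ∈ B ∧ p ∈ b ∧ q ∈ b)
    (p : X) :
    (B.filter (fun b => p ∈ b)).card = 2 ^ m + 1 := by
  have key := steiner_partition B hpair p Finset.univ
  have hterm : ∀ b ∈ B.filter (fun b => p ∈ b), ((b ∩ univ).erase p).card = 2 ^ s - 1 := by
    intro b hb
    simp only [mem_filter] at hb
    rw [Finset.inter_univ, Finset.card_erase_of_mem hb.2, hblock b hb.1]
  rw [Finset.sum_congr rfl hterm, Finset.sum_const, smul_eq_mul] at key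
  rw [Finset.card_erase_of_mem (mem_univ p), Finset.card_univ, hv] at key
  have h1 : 1 ≤ 2 ^ s := Nat.one_le_two_pow
  have h2 : 2 ^ m ≤ 2 ^ (m + s) := Nat.pow_le_pow_right (by norm_num) (by omega)
  have heq : (2 ^ m + 1) * (2 ^ s - 1) = 2 ^ (m + s) - 2 ^ m + 2 ^ s - 1 := by
    have h3 : 2 ^ (m + s) = 2 ^ m * 2 ^ s := pow_add 2 m s
    zify [h1, h2, show 1 ≤ 2 ^ (m + s) - 2 ^ m + 2 ^ s by omega]
    push_cast [h3]
    ring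
  have hpos : 0 < 2 ^ s - 1 := by
    have : 2 ≤ 2 ^ s := by
      calc 2 = 2 ^ 1 := rfl
      _ ≤ 2 ^ s := Nat.pow_le_pow_right (by norm_num) hs
    omega
  exact (Nat.eq_of_mul_eq_mul_right hpos (key ▸ heq)).symm

end Aux

/-- For a Steiner 2-(2^{m+s} - 2^m + 2^s, 2^s, 1) design D with m ≥ s ≥ 1 and
the dual C⊥ of its binary code: every nonzero codeword of C⊥ has weight at
least 2^m + 2; the minimum weight 2^m + 2 is attained if D contains a
hyperoval; and if D has no hyperoval then every nonzero codeword of C⊥ has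
weight at least 2^m + 4. -/
theorem dual_min_distance {X : Type*} [Fintype X] [DecidableEq X]
    (m s : ℕ) (hs : 1 ≤ s) (hms : s ≤ m)
    (B : Finset (Finset X))
    (hv : Fintype.card X = 2 ^ (m + s) - 2 ^ m + 2 ^ s)
    (hblock : ∀ b ∈ B, b.card = 2 ^ s)
    (hpair : ∀ p q : X, p ≠ q → ∃! b, b ∈ B ∧ p ∈ b ∧ q ∈ b) :
    (∀ c : X → ZMod 2, (∀ b ∈ B, ∑ p ∈ b, c p = 0) → c ≠ 0 →
      2 ^ m + 2 ≤ (univ.filter (fun p => c p ≠ 0)).card) ∧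
    ((∃ S : Finset X, S.card = 2 ^ m + 2 ∧
        ∀ b ∈ B, (S ∩ b).card = 0 ∨ (S ∩ b).card = 2) →
      ∃ c : X → ZMod 2, (∀ b ∈ B, ∑ p ∈ b, c p = 0) ∧ c ≠ 0 ∧
        (univ.filter (fun p => c p ≠ 0)).card = 2 ^ m + 2) ∧
    ((¬ ∃ S : Finset X, S.card = 2 ^ m + 2 ∧
        ∀ b ∈ B, (S ∩ b).card = 0 ∨ (S ∩ b).card = 2) →
      ∀ c : X → ZMod 2, (∀ b ∈ B, ∑ p ∈ b, c p = 0) → c ≠ 0 →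
        2 ^ m + 4 ≤ (univ.filter (fun p => c p ≠ 0)).card) := by
  have hrep : ∀ p : X, (B.filter (fun b => p ∈ b)).card = 2 ^ m + 1 :=
    steiner_replication m s hs B hv hblock hpair
  have hone : ∀ x : ZMod 2, x ≠ 0 → x = 1 := by decide
  -- the block sums of any `c` compute the intersection sizes of the support mod 2
  have hsum : ∀ (c : X → ZMod 2) (b : Finset X),
      ∑ p ∈ b, c p = (((b ∩ univ.filter (fun p => c p ≠ 0)).card : ℕ) : ZMod 2) := by
    intro c b
    have h1 : ∑ p ∈ b ∩ univ.filter (fun p => c p ≠ 0), c p = ∑ p ∈ b, c p := by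
      apply Finset.sum_subset Finset.inter_subset_left
      intro x hx hnx
      simp only [mem_inter, mem_filter, mem_univ, true_and, not_and, not_not] at hnx
      exact hnx hx
    rw [← h1]
    rw [Finset.sum_congr rfl (fun p hp => hone (c p)
      (by simp only [mem_inter, mem_filter] at hp; exact hp.2.2))]
    rw [Finset.sum_const, nsmul_eq_mul, mul_one]
  -- the core counting lemma: for any set meeting every block evenly, and any of
  -- its points p, the cardinality is at least 2^m+2, with the intersection
  -- sizes with blocks through p being exactly 2 in case of equality
  have inner : ∀ S : Finset X, (∀ b ∈ B, 2 ∣ (b ∩ S).card) → ∀ p ∈ S,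
      2 ^ m + 2 ≤ S.card ∧
      (S.card = 2 ^ m + 2 → ∀ b ∈ B.filter (fun b => p ∈ b), (b ∩ S).card = 2) := by
    intro S hev p hp
    have hpart := steiner_partition B hpair p S
    rw [Finset.card_erase_of_mem hp] at hpart
    have hterm : ∀ b ∈ B.filter (fun b => p ∈ b),
        ((b ∩ S).erase p).card = (b ∩ S).card - 1 := fun b hb =>
      Finset.card_erase_of_mem (mem_inter.2 ⟨(mem_filter.1 hb).2, hp⟩)
    rw [Finset.sum_congr rfl hterm] at hpart
    have hge : ∀ b ∈ B.filter (fun b => p ∈ b), 1 ≤ (b ∩ S).card - 1 := by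
      intro b hb
      have h1 : p ∈ b ∩ S := mem_inter.2 ⟨(mem_filter.1 hb).2, hp⟩
      have h2 : 1 ≤ (b ∩ S).card := Finset.card_pos.2 ⟨p, h1⟩
      have h3 := hev b (mem_filter.1 hb).1
      omega
    have hsum_ge : (B.filter (fun b => p ∈ b)).card • 1 ≤
        ∑ b ∈ B.filter (fun b => p ∈ b), ((b ∩ S).card - 1) :=
      Finset.card_nsmul_le_sum _ _ 1 hge
    rw [smul_eq_mul, mul_one, hrep p] at hsum_ge
    have hp1 : 1 ≤ S.card := Finset.card_pos.2 ⟨p, hp⟩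
    refine ⟨by omega, ?_⟩
    intro hScard b hb
    have heqsum : ∑ b ∈ B.filter (fun b => p ∈ b), (1 : ℕ) =
        ∑ b ∈ B.filter (fun b => p ∈ b), ((b ∩ S).card - 1) := by
      rw [Finset.sum_const, smul_eq_mul, mul_one, hrep p]
      omega
    have := (Finset.sum_eq_sum_iff_of_le hge).1 heqsum b hb
    have h1 : p ∈ b ∩ S := mem_inter.2 ⟨(mem_filter.1 hb).2, hp⟩
    have h2 : 1 ≤ (b ∩ S).card := Finset.card_pos.2 ⟨p, h1⟩
    omega
  -- parity: any set meeting every block evenly has even cardinality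
  have hparity : ∀ S : Finset X, (∀ b ∈ B, 2 ∣ (b ∩ S).card) → 2 ∣ S.card := by
    intro S hev
    have hdc : ∑ b ∈ B, (b ∩ S).card = S.card * (2 ^ m + 1) := by
      have h1 : ∀ b : Finset X, (b ∩ S).card = ∑ p ∈ S, if p ∈ b then 1 else 0 := by
        intro b
        rw [← Finset.card_filter]
        congr 1
        ext q
        simp only [mem_inter, mem_filter, and_comm]
      rw [Finset.sum_congr rfl (fun b _ => h1 b), Finset.sum_comm]
      have h2 : ∀ p ∈ S, (∑ b ∈ B, if p ∈ b then 1 else 0) = 2 ^ m + 1 := by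
        intro p _
        rw [← Finset.card_filter, hrep p]
      rw [Finset.sum_congr rfl h2, Finset.sum_const, smul_eq_mul]
    have h2 : 2 ∣ ∑ b ∈ B, (b ∩ S).card := Finset.dvd_sum hev
    rw [hdc] at h2
    have hm0 : m ≠ 0 := by omega
    have hodd : 2 ∣ 2 ^ m := dvd_pow_self 2 hm0
    rcases (Nat.Prime.dvd_mul Nat.prime_two).1 h2 with h | h
    · exact h
    · omega
  -- evenness of intersections for a codeword
  have heven : ∀ c : X → ZMod 2, (∀ b ∈ B, ∑ p ∈ b, c p = 0) →
      ∀ b ∈ B, 2 ∣ (b ∩ univ.filter (fun p => c p ≠ 0)).card := by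
    intro c hc b hb
    have := hc b hb
    rw [hsum c b] at this
    exact (ZMod.natCast_eq_zero_iff _ 2).1 this
  have hsupp_ne : ∀ c : X → ZMod 2, c ≠ 0 →
      ∃ p, p ∈ univ.filter (fun p => c p ≠ 0) := by
    intro c hc0
    obtain ⟨p, hp⟩ := Function.ne_iff.1 hc0
    exact ⟨p, mem_filter.2 ⟨mem_univ p, hp⟩⟩
  refine ⟨?_, ?_, ?_⟩
  · -- part 1
    intro c hc hc0
    obtain ⟨p, hp⟩ := hsupp_ne c hc0
    exact (inner _ (heven c hc) p hp).1
  · -- part 2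
    rintro ⟨S, hScard, hSb⟩
    refine ⟨fun p => if p ∈ S then 1 else 0, ?_, ?_, ?_⟩
    · intro b hb
      rw [hsum]
      have hfix : univ.filter (fun p => (if p ∈ S then (1 : ZMod 2) else 0) ≠ 0) = S := by
        ext p
        by_cases h : p ∈ S <;> simp [h]
      rw [hfix]
      rcases hSb b hb with h | h <;>
        rw [Finset.inter_comm, h] <;> decide
    · intro h0
      have hScard' : 0 < S.card := by rw [hScard]; positivity
      obtain ⟨p, hp⟩ := Finset.card_pos.1 hScard'
      have : (fun p => if p ∈ S then (1 : ZMod 2) else 0) p = 0 := by rw [h0]; rfl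
      simp [hp] at this
    · have hfix : univ.filter (fun p => (if p ∈ S then (1 : ZMod 2) else 0) ≠ 0) = S := by
        ext p
        by_cases h : p ∈ S <;> simp [h]
      rw [hfix, hScard]
  · -- part 3
    intro hno c hc hc0
    set Sc := univ.filter (fun p => c p ≠ 0) with hSc
    obtain ⟨p, hp⟩ := hsupp_ne c hc0
    have hev := heven c hc
    have h1 := (inner Sc hev p hp).1
    have h2 := hparity Sc hev
    have hne : Sc.card ≠ 2 ^ m + 2 := by
      intro hcard
      apply hno
      refine ⟨Sc, hcard, ?_⟩
      intro b hb
      rcases (b ∩ Sc).eq_empty_or_nonempty with he | ⟨q, hq⟩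
      · left
        rw [Finset.inter_comm]
        simp [he]
      · right
        have hqS : q ∈ Sc := (mem_inter.1 hq).2
        have hqb : q ∈ b := (mem_inter.1 hq).1
        rw [Finset.inter_comm]
        exact (inner Sc hev q hqS).2 hcard b (mem_filter.2 ⟨hb, hqb⟩)
    have hm0 : m ≠ 0 := by omega
    have hdvd : 2 ∣ 2 ^ m := dvd_pow_self 2 hm0
    omega
end

section
/- Let D be a Steiner 2-(v,k,1) design with replication number r, and let S be a nonempty set of points meeting every block in an even number of points. Then |S| ≥ r + 1. -/
/-- In a Steiner 2-(v,k,1) design with replication number r, a nonempty set of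
points meeting every block in an even number of points has size at least r+1. -/
theorem even_set_card_ge {X : Type*} [Fintype X] [DecidableEq X]
    (k r : ℕ) (hk : 2 ≤ k)
    (B : Finset (Finset X))
    (hblock : ∀ b ∈ B, b.card = k)
    (hpair : ∀ p q : X, p ≠ q → ∃! b, b ∈ B ∧ p ∈ b ∧ q ∈ b)
    (hrep : ∀ p : X, (B.filter (fun b => p ∈ b)).card = r)
    (S : Finset X) (hne : S.Nonempty)
    (heven : ∀ b ∈ B, Even ((S ∩ b).card)) :
    r + 1 ≤ S.card := by
  obtain ⟨p, hp⟩ := hne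
  set F := B.filter (fun b => p ∈ b) with hF
  have hcard : F.card = r := hrep p
  have hdisj : ∀ b1 ∈ F, ∀ b2 ∈ F, b1 ≠ b2 →
      Disjoint ((S ∩ b1).erase p) ((S ∩ b2).erase p) := by
    intro b1 h1 b2 h2 hne12
    rw [Finset.disjoint_left]
    intro q hq1 hq2
    simp only [Finset.mem_erase, Finset.mem_inter] at hq1 hq2
    obtain ⟨b, _, hb⟩ := hpair p q (fun h => hq1.1 h.symm)
    have hb1 : b1 = b := hb b1 ⟨(Finset.mem_filter.mp h1).1, (Finset.mem_filter.mp h1).2, hq1.2.2⟩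
    have hb2 : b2 = b := hb b2 ⟨(Finset.mem_filter.mp h2).1, (Finset.mem_filter.mp h2).2, hq2.2.2⟩
    exact hne12 (hb1.trans hb2.symm)
  have hsub : F.biUnion (fun b => (S ∩ b).erase p) ⊆ S.erase p := by
    intro q hq
    obtain ⟨b, _, hqb⟩ := Finset.mem_biUnion.mp hq
    rw [Finset.mem_erase, Finset.mem_inter] at hqb
    exact Finset.mem_erase.mpr ⟨hqb.1, hqb.2.1⟩
  have h1 : r ≤ (S.erase p).card := by
    calc r = F.card := hcard.symm
    _ = ∑ _b ∈ F, 1 := by simp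
    _ ≤ ∑ b ∈ F, ((S ∩ b).erase p).card := by
        apply Finset.sum_le_sum
        intro b hb
        have hbB := (Finset.mem_filter.mp hb).1
        have hpb := (Finset.mem_filter.mp hb).2
        have hev := heven b hbB
        have hpin : p ∈ S ∩ b := Finset.mem_inter.mpr ⟨hp, hpb⟩
        have hpos : 0 < (S ∩ b).card := Finset.card_pos.mpr ⟨p, hpin⟩
        obtain ⟨m, hm⟩ := hev
        rw [Finset.card_erase_of_mem hpin]
        omega
    _ = (F.biUnion (fun b => (S ∩ b).erase p)).card :=
        (Finset.card_biUnion hdisj).symm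
    _ ≤ (S.erase p).card := Finset.card_le_card hsub
  have h2 : 0 < S.card := Finset.card_pos.mpr ⟨p, hp⟩
  rw [Finset.card_erase_of_mem hp] at h1
  omega
end
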